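/- Let N be a positive integer, p a prime not dividing N, j an integer with 0 ≤ j < N, and (k₁,…,k_r) a tuple of positive integers of weight k = k₁+⋯+k_r. Then in ZMod p one has Σ_{jp/N < m₁ < ⋯ < m_r < (j+1)p/N} 1/(m₁^{k₁}⋯m_r^{k_r}) = N^k · Σ_{0 < n₁ < ⋯ < n_r < p, n_i ≡ −jp (mod N) for all i} 1/(n₁^{k₁}⋯n_r^{k_r}), where both sides are the images in ZMod p of the corresponding rational sums (all summands have denominator coprime to p). -/

import Mathlib

open Finset

open scoped Classical

/-- **Lemma 2.3 (j-sum).** For a prime `p` not dividing `N`, `0 ≤ j < N`, and an index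
`(k₁,…,k_r)` of weight `k`, the sum of `1/(m₁^{k₁}⋯m_r^{k_r})` over strictly increasing tuples
with `jp/N < m₁ < ⋯ < m_r < (j+1)p/N` equals `N^k` times the sum over strictly increasing
tuples `0 < n₁ < ⋯ < n_r < p` with `n_i ≡ -jp (mod N)`, as elements of `ZMod p`. -/
theorem jSum (N p : ℕ) (hN : 0 < N) (hp : p.Prime) (hpN : ¬ p ∣ N)
    (j : ℕ) (hj : j < N) (r : ℕ) (k : Fin r → ℕ) (hk : ∀ i, 0 < k i) :
    (∑ m ∈ (Fintype.piFinset fun _ : Fin r => Finset.Ioo 0 p).filter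
        (fun m : Fin r → ℕ => StrictMono m ∧ ∀ i, j * p < N * m i ∧ N * m i < (j + 1) * p),
      ∏ i, ((m i : ZMod p) ^ k i)⁻¹)
    = (N : ZMod p) ^ (∑ i, k i) *
      ∑ n ∈ (Fintype.piFinset fun _ : Fin r => Finset.Ioo 0 p).filter
        (fun n : Fin r → ℕ => StrictMono n ∧
          ∀ i, ((n i : ZMod N) = -((j : ZMod N) * (p : ZMod N)))),
      ∏ i, ((n i : ZMod p) ^ k i)⁻¹ := by
  haveI := Fact.mk hp
  have hNz : (N : ZMod p) ≠ 0 := by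
    simpa [ZMod.natCast_eq_zero_iff] using hpN
  rw [Finset.mul_sum]
  refine Finset.sum_nbij' (fun m i => N * m i - j * p) (fun n i => (n i + j * p) / N)
    ?_ ?_ ?_ ?_ ?_
  · intro m hm
    simp only [mem_filter, Fintype.mem_piFinset, mem_Ioo] at hm ⊢
    obtain ⟨h1, h2, h3⟩ := hm
    refine ⟨fun i => ⟨?_, ?_⟩, ?_, fun i => ?_⟩
    · have := (h3 i).1; omega
    · have h4 := (h3 i).2
      have he : (j + 1) * p = j * p + p := by ring
      have hp0 := hp.pos
      omega
    · intro a b hab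
      have ha := (h3 a).1
      have hb := (h3 b).1
      have hmm : N * m a < N * m b := (Nat.mul_lt_mul_left hN).2 (h2 hab)
      show N * m a - j * p < N * m b - j * p
      omega
    · have h4 := (h3 i).1
      have : ((N * m i - j * p : ℕ) : ZMod N) = ((N * m i : ℕ) : ZMod N) - ((j * p : ℕ) : ZMod N) := by
        rw [Nat.cast_sub (le_of_lt h4)]
      rw [this]
      push_cast
      simp
  · intro n hn
    simp only [mem_filter, Fintype.mem_piFinset, mem_Ioo] at hn ⊢
    obtain ⟨h1, h2, h3⟩ := hn
    have hdvd : ∀ i, N ∣ n i + j * p := by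
      intro i
      have := h3 i
      have : ((n i + j * p : ℕ) : ZMod N) = 0 := by push_cast [this]; ring
      exact (ZMod.natCast_eq_zero_iff _ _).mp this
    refine ⟨fun i => ⟨?_, ?_⟩, ?_, fun i => ⟨?_, ?_⟩⟩
    · have h := hdvd i
      have hpos : 0 < n i + j * p := by have := (h1 i).1; omega
      exact Nat.div_pos (Nat.le_of_dvd hpos h) hN
    · have h := hdvd i
      have h5 : n i + j * p < (j + 1) * p :=
        calc n i + j * p < p + j * p := by have := (h1 i).2; omega
          _ = (j + 1) * p := by ring
      have h6 : (j + 1) * p ≤ N * p := Nat.mul_le_mul_right p (by omega)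
      exact Nat.div_lt_of_lt_mul (by omega)
    · intro a b hab
      have := h2 hab
      exact Nat.div_lt_div_of_lt_of_dvd (hdvd b) (by omega)
    · have h := hdvd i
      have : N * ((n i + j * p) / N) = n i + j * p := Nat.mul_div_cancel' h
      have := (h1 i).1
      omega
    · have h := hdvd i
      have heq : N * ((n i + j * p) / N) = n i + j * p := Nat.mul_div_cancel' h
      have h5 : n i + j * p < (j + 1) * p :=
        calc n i + j * p < p + j * p := by have := (h1 i).2; omega
          _ = (j + 1) * p := by ring
      omega
  · intro m hm
    simp only [mem_filter, Fintype.mem_piFinset, mem_Ioo] at hm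
    obtain ⟨h1, h2, h3⟩ := hm
    funext i
    show (N * m i - j * p + j * p) / N = m i
    have h4 := (h3 i).1
    have h5 : N * m i - j * p + j * p = N * m i := by omega
    rw [h5, Nat.mul_div_cancel_left _ hN]
  · intro n hn
    simp only [mem_filter, Fintype.mem_piFinset, mem_Ioo] at hn
    obtain ⟨h1, h2, h3⟩ := hn
    have hdvd : ∀ i, N ∣ n i + j * p := by
      intro i
      have := h3 i
      have : ((n i + j * p : ℕ) : ZMod N) = 0 := by push_cast [this]; ring
      exact (ZMod.natCast_eq_zero_iff _ _).mp this
    funext i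
    show N * ((n i + j * p) / N) - j * p = n i
    have heq : N * ((n i + j * p) / N) = n i + j * p := Nat.mul_div_cancel' (hdvd i)
    omega
  · intro m hm
    simp only [mem_filter, Fintype.mem_piFinset, mem_Ioo] at hm
    obtain ⟨h1, h2, h3⟩ := hm
    have hcast : ∀ i, ((N * m i - j * p : ℕ) : ZMod p) = (N : ZMod p) * (m i : ZMod p) := by
      intro i
      rw [Nat.cast_sub (le_of_lt (h3 i).1)]
      push_cast
      simp [ZMod.natCast_self]
    calc ∏ i, ((m i : ZMod p) ^ k i)⁻¹
        = (N : ZMod p) ^ (∑ i, k i) * ((N : ZMod p) ^ (∑ i, k i))⁻¹ *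
            ∏ i, ((m i : ZMod p) ^ k i)⁻¹ := by
          rw [mul_inv_cancel₀ (pow_ne_zero _ hNz), one_mul]
      _ = (N : ZMod p) ^ (∑ i, k i) * ∏ i, (((N * m i - j * p : ℕ) : ZMod p) ^ k i)⁻¹ := by
          rw [mul_assoc]
          congr 1
          rw [← Finset.prod_pow_eq_pow_sum, ← Finset.prod_inv_distrib, ← Finset.prod_mul_distrib]
          refine Finset.prod_congr rfl fun i _ => ?_
          rw [hcast i, mul_pow, mul_inv]
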